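/- arXiv:2307.06328 — 7 statements merged into one kernel-verified Lean document; each statement's English description precedes it below -/
import Mathlib

section
/- Let S and A be finite nonempty sets, B ∈ ℕ, γ ∈ [0,1), μ : S → probability distributions on A, r : S × A → ℝ bounded, and P : S × A → probability distributions on S. Define for Q : S × Fin(B+1) × A → ℝ the value V_Q(s', b) := max( max_{a'} Q(s', b-1, a'), E_{a'∼μ(s')}[Q(s', b, a')] ) when b > 0, and V_Q(s', 0) := E_{a'∼μ(s')}[Q(s', 0, a')]. Then the counterfactual-budgeting Bellman operator T Q(s, b, a) := r(s,a) + γ E_{s'∼P(s,a)}[V_Q(s', b)] satisfies ‖T Q₁ - T Q₂‖_∞ ≤ γ ‖Q₁ - Q₂‖_∞ for all Q₁, Q₂. -/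
open Finset

/-- Expectation of `f` under a (finitely supported) distribution `p` on a finite type. -/
noncomputable def expct {A : Type*} [Fintype A] (p : A → ℝ) (f : A → ℝ) : ℝ :=
  ∑ a, p a * f a

/-- Maximum of a real-valued function on a finite nonempty type. -/
noncomputable def amax {A : Type*} [Fintype A] [Nonempty A] (f : A → ℝ) : ℝ :=
  Finset.univ.sup' Finset.univ_nonempty f

/-- The counterfactual-budgeting value `V_Q(s, b)`. -/
noncomputable def VQ {S A : Type*} [Fintype A] [Nonempty A] {B : ℕ}
    (μ : S → A → ℝ) (Q : S → Fin (B + 1) → A → ℝ) (s : S) (b : Fin (B + 1)) : ℝ :=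
  if _ : (b : ℕ) = 0 then expct (μ s) (Q s b)
  else max (amax (Q s ⟨(b : ℕ) - 1, lt_of_le_of_lt (Nat.sub_le _ _) b.isLt⟩))
           (expct (μ s) (Q s b))

/-- The counterfactual-budgeting Bellman operator `T`. -/
noncomputable def TCB {S A : Type*} [Fintype S] [Fintype A] [Nonempty A] {B : ℕ}
    (γ : ℝ) (r : S → A → ℝ) (P : S → A → S → ℝ) (μ : S → A → ℝ)
    (Q : S → Fin (B + 1) → A → ℝ) : S → Fin (B + 1) → A → ℝ :=
  fun s b a => r s a + γ * ∑ s', P s a s' * VQ μ Q s' b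

/-- Sup norm over state-budget-action triples. -/
noncomputable def supNorm3 {S A : Type*} [Fintype S] [Nonempty S] [Fintype A] [Nonempty A]
    {B : ℕ} (Q : S → Fin (B + 1) → A → ℝ) : ℝ :=
  Finset.univ.sup' Finset.univ_nonempty
    (fun x : S × Fin (B + 1) × A => |Q x.1 x.2.1 x.2.2|)

/-- Sup norm over state-budget pairs. -/
noncomputable def supNorm2 {S : Type*} [Fintype S] [Nonempty S]
    {B : ℕ} (V : S → Fin (B + 1) → ℝ) : ℝ :=
  Finset.univ.sup' Finset.univ_nonempty (fun x : S × Fin (B + 1) => |V x.1 x.2|)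

/-- Sup norm over state-action pairs. -/
noncomputable def supNormSA {S A : Type*} [Fintype S] [Nonempty S] [Fintype A] [Nonempty A]
    (Q : S → A → ℝ) : ℝ :=
  Finset.univ.sup' Finset.univ_nonempty (fun x : S × A => |Q x.1 x.2|)


lemma expct_abs_le {A : Type*} [Fintype A] (p f g : A → ℝ) (hp0 : ∀ a, 0 ≤ p a)
    (hp1 : ∑ a, p a = 1) (M : ℝ) (h : ∀ a, |f a - g a| ≤ M) :
    |expct p f - expct p g| ≤ M := by
  have heq : expct p f - expct p g = ∑ a, p a * (f a - g a) := by
    simp [expct, ← Finset.sum_sub_distrib, mul_sub]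
  rw [heq]
  calc |∑ a, p a * (f a - g a)| ≤ ∑ a, |p a * (f a - g a)| := Finset.abs_sum_le_sum_abs _ _
    _ ≤ ∑ a, p a * M := by
        apply Finset.sum_le_sum
        intro a _
        rw [abs_mul, abs_of_nonneg (hp0 a)]
        exact mul_le_mul_of_nonneg_left (h a) (hp0 a)
    _ = M := by rw [← Finset.sum_mul, hp1, one_mul]

lemma amax_abs_le {A : Type*} [Fintype A] [Nonempty A] (f g : A → ℝ) (M : ℝ)
    (h : ∀ a, |f a - g a| ≤ M) : |amax f - amax g| ≤ M := by
  have key : ∀ (f g : A → ℝ), (∀ a, |f a - g a| ≤ M) → amax f - amax g ≤ M := by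
    intro f g h
    obtain ⟨a, -, ha⟩ := Finset.exists_mem_eq_sup' (Finset.univ_nonempty (α := A)) f
    have h1 : g a ≤ amax g := Finset.le_sup' g (Finset.mem_univ a)
    have h2 : f a - g a ≤ M := (abs_le.mp (h a)).2
    have h3 : amax f = f a := ha
    simp only [amax] at *
    linarith
  rw [abs_le]
  constructor
  · have := key g f (fun a => by rw [abs_sub_comm]; exact h a); linarith
  · exact key f g h

lemma VQ_abs_le {S A : Type*} [Fintype S] [Nonempty S] [Fintype A] [Nonempty A] {B : ℕ}
    (μ : S → A → ℝ) (hμ0 : ∀ s a, 0 ≤ μ s a) (hμ1 : ∀ s, ∑ a, μ s a = 1)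
    (Q₁ Q₂ : S → Fin (B + 1) → A → ℝ) (s : S) (b : Fin (B + 1)) :
    |VQ μ Q₁ s b - VQ μ Q₂ s b| ≤ supNorm3 (fun s b a => Q₁ s b a - Q₂ s b a) := by
  set M := supNorm3 (fun s b a => Q₁ s b a - Q₂ s b a) with hM
  have hQ : ∀ (s : S) (b : Fin (B + 1)) (a : A), |Q₁ s b a - Q₂ s b a| ≤ M :=
    fun s b a => Finset.le_sup'
      (fun x : S × Fin (B + 1) × A => |Q₁ x.1 x.2.1 x.2.2 - Q₂ x.1 x.2.1 x.2.2|)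
      (Finset.mem_univ (s, b, a))
  unfold VQ
  split
  · exact expct_abs_le _ _ _ (hμ0 s) (hμ1 s) M (hQ s b)
  · refine le_trans (abs_max_sub_max_le_max _ _ _ _) (max_le ?_ ?_)
    · exact amax_abs_le _ _ M (hQ s _)
    · exact expct_abs_le _ _ _ (hμ0 s) (hμ1 s) M (hQ s b)

theorem TCB_contraction {S A : Type*} [Fintype S] [Nonempty S] [Fintype A] [Nonempty A] {B : ℕ}
    (γ : ℝ) (hγ0 : 0 ≤ γ) (hγ1 : γ < 1)
    (r : S → A → ℝ)
    (P : S → A → S → ℝ) (hP0 : ∀ s a s', 0 ≤ P s a s') (hP1 : ∀ s a, ∑ s', P s a s' = 1)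
    (μ : S → A → ℝ) (hμ0 : ∀ s a, 0 ≤ μ s a) (hμ1 : ∀ s, ∑ a, μ s a = 1)
    (Q₁ Q₂ : S → Fin (B + 1) → A → ℝ) :
    supNorm3 (fun s b a => TCB γ r P μ Q₁ s b a - TCB γ r P μ Q₂ s b a)
      ≤ γ * supNorm3 (fun s b a => Q₁ s b a - Q₂ s b a) := by
  apply Finset.sup'_le
  rintro ⟨s, b, a⟩ -
  simp only [TCB]
  have key : |γ * ∑ s', P s a s' * VQ μ Q₁ s' b - γ * ∑ s', P s a s' * VQ μ Q₂ s' b|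
      ≤ γ * supNorm3 (fun s b a => Q₁ s b a - Q₂ s b a) := by
    rw [← mul_sub, abs_mul, abs_of_nonneg hγ0, ← Finset.sum_sub_distrib]
    apply mul_le_mul_of_nonneg_left _ hγ0
    calc |∑ s', (P s a s' * VQ μ Q₁ s' b - P s a s' * VQ μ Q₂ s' b)|
        ≤ ∑ s', |P s a s' * VQ μ Q₁ s' b - P s a s' * VQ μ Q₂ s' b| :=
          Finset.abs_sum_le_sum_abs _ _
      _ ≤ ∑ s', P s a s' * supNorm3 (fun s b a => Q₁ s b a - Q₂ s b a) := by
          apply Finset.sum_le_sum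
          intro s' _
          rw [← mul_sub, abs_mul, abs_of_nonneg (hP0 s a s')]
          exact mul_le_mul_of_nonneg_left (VQ_abs_le μ hμ0 hμ1 Q₁ Q₂ s' b) (hP0 s a s')
      _ = supNorm3 (fun s b a => Q₁ s b a - Q₂ s b a) := by
          rw [← Finset.sum_mul, hP1, one_mul]
  calc |r s a + γ * ∑ s', P s a s' * VQ μ Q₁ s' b - (r s a + γ * ∑ s', P s a s' * VQ μ Q₂ s' b)|
      = |γ * ∑ s', P s a s' * VQ μ Q₁ s' b - γ * ∑ s', P s a s' * VQ μ Q₂ s' b| := by ring_nf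
    _ ≤ γ * supNorm3 (fun s b a => Q₁ s b a - Q₂ s b a) := key
end

section
/- Any fixed point Q of the counterfactual-budgeting Bellman operator is monotone in the budget: for all states s, actions a, and budgets b > b' (with b, b' ∈ {0, ..., B}), Q(s, b, a) ≥ Q(s, b', a). -/
open Finset

lemma expct_sub_le' {A : Type*} [Fintype A] (p f g : A → ℝ) (D : ℝ)
    (hp0 : ∀ a, 0 ≤ p a) (hp1 : ∑ a, p a = 1)
    (h : ∀ a, f a - g a ≤ D) : expct p f - expct p g ≤ D := by
  have he : expct p f - expct p g = ∑ a, p a * (f a - g a) := by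
    simp [expct, mul_sub, Finset.sum_sub_distrib]
  rw [he]
  calc ∑ a, p a * (f a - g a) ≤ ∑ a, p a * D :=
        Finset.sum_le_sum fun a _ => mul_le_mul_of_nonneg_left (h a) (hp0 a)
    _ = D := by rw [← Finset.sum_mul, hp1, one_mul]

lemma amax_sub_le' {A : Type*} [Fintype A] [Nonempty A] (f g : A → ℝ) (D : ℝ)
    (h : ∀ a, f a - g a ≤ D) : amax f - amax g ≤ D := by
  rw [sub_le_iff_le_add, amax]
  apply Finset.sup'_le
  intro a _
  have h1 : g a ≤ amax g := Finset.le_sup' g (Finset.mem_univ a)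
  linarith [h a]

lemma VQ_succ' {S A : Type*} [Fintype A] [Nonempty A] {B : ℕ}
    (μ : S → A → ℝ) (Q : S → Fin (B + 1) → A → ℝ) (s : S) (j : Fin B) :
    VQ μ Q s j.succ = max (amax (Q s j.castSucc)) (expct (μ s) (Q s j.succ)) := by
  rw [VQ, dif_neg (by simp)]
  have e : (⟨(j.succ : ℕ) - 1, lt_of_le_of_lt (Nat.sub_le _ _) j.succ.isLt⟩ : Fin (B+1))
      = j.castSucc := by apply Fin.ext; simp
  rw [e]

theorem fixedPoint_budget_monotone {S A : Type*} [Fintype S] [Nonempty S] [Fintype A] [Nonempty A] {B : ℕ}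
    (γ : ℝ) (hγ0 : 0 ≤ γ) (hγ1 : γ < 1)
    (r : S → A → ℝ)
    (P : S → A → S → ℝ) (hP0 : ∀ s a s', 0 ≤ P s a s') (hP1 : ∀ s a, ∑ s', P s a s' = 1)
    (μ : S → A → ℝ) (hμ0 : ∀ s a, 0 ≤ μ s a) (hμ1 : ∀ s, ∑ a, μ s a = 1)
    (Q : S → Fin (B + 1) → A → ℝ) (hQ : TCB γ r P μ Q = Q)
    (s : S) (a : A) (b b' : Fin (B + 1)) (hbb : b' < b) :
    Q s b' a ≤ Q s b a := by
  -- consecutive-step monotonicity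
  have hcons : ∀ (s : S) (a : A) (k : Fin (B+1)) (hk : (k : ℕ) < B),
      Q s k a ≤ Q s ⟨(k : ℕ) + 1, by omega⟩ a := by
    intro s a k hk
    haveI : Nonempty (Fin B) := ⟨⟨0, by omega⟩⟩
    set D : ℝ := Finset.univ.sup' Finset.univ_nonempty
      (fun x : S × Fin B × A => Q x.1 x.2.1.castSucc x.2.2 - Q x.1 x.2.1.succ x.2.2) with hD
    have hDge : ∀ (s : S) (j : Fin B) (a : A),
        Q s j.castSucc a - Q s j.succ a ≤ D := by
      intro s j a
      exact Finset.le_sup'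
        (fun x : S × Fin B × A => Q x.1 x.2.1.castSucc x.2.2 - Q x.1 x.2.1.succ x.2.2)
        (Finset.mem_univ (s, j, a))
    have hVgap : ∀ (s' : S) (j : Fin B),
        VQ μ Q s' j.castSucc - VQ μ Q s' j.succ ≤ D := by
      intro s' j
      rw [VQ_succ']
      have hE : expct (μ s') (Q s' j.castSucc) - expct (μ s') (Q s' j.succ) ≤ D :=
        expct_sub_le' (μ s') _ _ D (hμ0 s') (hμ1 s') (fun a => hDge s' j a)
      by_cases hj : (j.castSucc : ℕ) = 0
      · rw [VQ, dif_pos hj]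
        have := le_max_right (amax (Q s' j.castSucc)) (expct (μ s') (Q s' j.succ))
        linarith
      · rw [VQ, dif_neg hj]
        have hj1 : 1 ≤ (j : ℕ) := by
          simp at hj; omega
        set jp : Fin B := ⟨(j : ℕ) - 1, by omega⟩ with hjp
        have e1 : (⟨(j.castSucc : ℕ) - 1, lt_of_le_of_lt (Nat.sub_le _ _) j.castSucc.isLt⟩ : Fin (B+1))
            = jp.castSucc := by apply Fin.ext; simp [hjp]
        have e2 : jp.succ = j.castSucc := by apply Fin.ext; simp [hjp]; omega
        rw [e1]
        have hA : amax (Q s' jp.castSucc) - amax (Q s' jp.succ) ≤ D :=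
          amax_sub_le' _ _ D (fun a => hDge s' jp a)
        rw [e2] at hA
        rw [sub_le_iff_le_add]
        apply max_le
        · have := le_max_left (amax (Q s' j.castSucc)) (expct (μ s') (Q s' j.succ))
          linarith
        · have := le_max_right (amax (Q s' j.castSucc)) (expct (μ s') (Q s' j.succ))
          linarith
    have hstep : ∀ (s : S) (j : Fin B) (a : A),
        Q s j.castSucc a - Q s j.succ a ≤ γ * D := by
      intro s j a
      have h1 : Q s j.castSucc a = r s a + γ * ∑ s', P s a s' * VQ μ Q s' j.castSucc := by
        conv_lhs => rw [← hQ]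
        rfl
      have h2 : Q s j.succ a = r s a + γ * ∑ s', P s a s' * VQ μ Q s' j.succ := by
        conv_lhs => rw [← hQ]
        rfl
      have h3 : Q s j.castSucc a - Q s j.succ a
          = γ * ∑ s', P s a s' * (VQ μ Q s' j.castSucc - VQ μ Q s' j.succ) := by
        rw [h1, h2]
        simp only [mul_sub, Finset.sum_sub_distrib]
        ring
      rw [h3]
      have h4 : ∑ s', P s a s' * (VQ μ Q s' j.castSucc - VQ μ Q s' j.succ) ≤ D := by
        calc ∑ s', P s a s' * (VQ μ Q s' j.castSucc - VQ μ Q s' j.succ)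
            ≤ ∑ s', P s a s' * D :=
              Finset.sum_le_sum fun s' _ =>
                mul_le_mul_of_nonneg_left (hVgap s' j) (hP0 s a s')
          _ = D := by rw [← Finset.sum_mul, hP1, one_mul]
      exact mul_le_mul_of_nonneg_left h4 hγ0
    have hDγ : D ≤ γ * D := by
      rw [hD]
      apply Finset.sup'_le
      intro x _
      exact hstep x.1 x.2.1 x.2.2
    have hD0 : D ≤ 0 := by nlinarith
    have hgap := hDge s ⟨(k : ℕ), hk⟩ a
    have ec : (⟨(k : ℕ), hk⟩ : Fin B).castSucc = k := by apply Fin.ext; simp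
    have es : (⟨(k : ℕ), hk⟩ : Fin B).succ = (⟨(k : ℕ) + 1, by omega⟩ : Fin (B+1)) := by
      apply Fin.ext; simp
    rw [ec, es] at hgap
    linarith
  -- iterate
  have key : ∀ n : ℕ, ∀ j k : Fin (B+1), (k : ℕ) = (j : ℕ) + n → Q s j a ≤ Q s k a := by
    intro n
    induction n with
    | zero =>
        intro j k h
        have hjk : j = k := by apply Fin.ext; omega
        rw [hjk]
    | succ n ih =>
        intro j k h
        have hmid : (j : ℕ) + n < B + 1 := by omega
        have h1 : Q s j a ≤ Q s ⟨(j : ℕ) + n, hmid⟩ a := ih j _ rfl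
        have h2 : Q s ⟨(j : ℕ) + n, hmid⟩ a ≤ Q s k a := by
          have hlt : ((⟨(j : ℕ) + n, hmid⟩ : Fin (B+1)) : ℕ) < B := by
            simp; omega
          have hc := hcons s a ⟨(j : ℕ) + n, hmid⟩ hlt
          have ek : (⟨((⟨(j : ℕ) + n, hmid⟩ : Fin (B+1)) : ℕ) + 1, by omega⟩ : Fin (B+1)) = k := by
            apply Fin.ext; simp; omega
          rwa [ek] at hc
        linarith
  exact key ((b : ℕ) - (b' : ℕ)) b' b (by omega)
end

section
/- If Q : S × {0,...,B} × A → ℝ is nondecreasing in the budget argument (Q(s,b,a) ≤ Q(s,b+1,a) for all s, a, and b < B), then T Q is also nondecreasing in the budget argument, where T is the counterfactual-budgeting Bellman operator. -/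
open Finset

lemma expct_mono {A : Type*} [Fintype A] (p : A → ℝ) (hp : ∀ a, 0 ≤ p a)
    {f g : A → ℝ} (h : ∀ a, f a ≤ g a) : expct p f ≤ expct p g := by
  unfold expct
  exact Finset.sum_le_sum fun a _ => mul_le_mul_of_nonneg_left (h a) (hp a)

lemma amax_mono {A : Type*} [Fintype A] [Nonempty A] {f g : A → ℝ}
    (h : ∀ a, f a ≤ g a) : amax f ≤ amax g := by
  unfold amax
  exact Finset.sup'_mono_fun fun a _ => h a

lemma expct_le_amax {A : Type*} [Fintype A] [Nonempty A] (p : A → ℝ)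
    (hp : ∀ a, 0 ≤ p a) (hp1 : ∑ a, p a = 1) (f : A → ℝ) : expct p f ≤ amax f := by
  unfold expct amax
  calc ∑ a, p a * f a ≤ ∑ a, p a * Finset.univ.sup' Finset.univ_nonempty f :=
        Finset.sum_le_sum fun a _ => mul_le_mul_of_nonneg_left
          (Finset.le_sup' f (Finset.mem_univ a)) (hp a)
    _ = Finset.univ.sup' Finset.univ_nonempty f := by
        rw [← Finset.sum_mul, hp1, one_mul]

lemma VQ_budget_mono {S A : Type*} [Fintype A] [Nonempty A] {B : ℕ}
    (μ : S → A → ℝ) (hμ0 : ∀ s a, 0 ≤ μ s a) (hμ1 : ∀ s, ∑ a, μ s a = 1)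
    (Q : S → Fin (B + 1) → A → ℝ)
    (hmono : ∀ (s : S) (a : A) (b : Fin (B + 1)) (h : (b : ℕ) < B),
      Q s b a ≤ Q s ⟨(b : ℕ) + 1, Nat.add_lt_add_right h 1⟩ a)
    (s : S) (b : Fin (B + 1)) (h : (b : ℕ) < B) :
    VQ μ Q s b ≤ VQ μ Q s ⟨(b : ℕ) + 1, Nat.add_lt_add_right h 1⟩ := by
  have hE : expct (μ s) (Q s b) ≤ expct (μ s) (Q s ⟨(b : ℕ) + 1, by omega⟩) :=
    expct_mono _ (hμ0 s) fun a => hmono s a b h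
  unfold VQ
  rcases Nat.eq_zero_or_pos (b : ℕ) with hb0 | hbpos
  · rw [dif_pos hb0, dif_neg (by simp)]
    exact le_trans hE (le_max_right _ _)
  · rw [dif_neg (by omega), dif_neg (by simp)]
    apply max_le_max
    · have hfin : (⟨(b:ℕ) - 1 + 1, by omega⟩ : Fin (B+1)) = ⟨(b:ℕ)+1-1, by omega⟩ := by
        simp [Fin.ext_iff]; omega
      refine amax_mono fun a => ?_
      have := hmono s a ⟨(b:ℕ)-1, by omega⟩ (by simp; omega)
      simpa [hfin] using this
    · simpa using hE

theorem TCB_preserves_budget_monotone {S A : Type*} [Fintype S] [Nonempty S] [Fintype A] [Nonempty A] {B : ℕ}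
    (γ : ℝ) (hγ0 : 0 ≤ γ) (hγ1 : γ < 1)
    (r : S → A → ℝ)
    (P : S → A → S → ℝ) (hP0 : ∀ s a s', 0 ≤ P s a s') (hP1 : ∀ s a, ∑ s', P s a s' = 1)
    (μ : S → A → ℝ) (hμ0 : ∀ s a, 0 ≤ μ s a) (hμ1 : ∀ s, ∑ a, μ s a = 1)
    (Q : S → Fin (B + 1) → A → ℝ)
    (hmono : ∀ (s : S) (a : A) (b : Fin (B + 1)) (h : (b : ℕ) < B),
      Q s b a ≤ Q s ⟨(b : ℕ) + 1, by omega⟩ a)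
    (s : S) (a : A) (b : Fin (B + 1)) (h : (b : ℕ) < B) :
    TCB γ r P μ Q s b a ≤ TCB γ r P μ Q s ⟨(b : ℕ) + 1, by omega⟩ a := by
  
  unfold TCB
  have key : ∀ s', P s a s' * VQ μ Q s' b ≤ P s a s' * VQ μ Q s' ⟨(b : ℕ) + 1, by omega⟩ :=
    fun s' => mul_le_mul_of_nonneg_left (VQ_budget_mono μ hμ0 hμ1 Q hmono s' b h) (hP0 s a s')
  exact add_le_add le_rfl (mul_le_mul_of_nonneg_left
    (Finset.sum_le_sum fun s' _ => key s') hγ0)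
end

section
/- At budget 0, the fixed point Q* of the counterfactual-budgeting Bellman operator equals the behavior policy's action-value function: Q*(s, 0, a) = Q^μ(s, a) for all s, a, where Q^μ is the unique solution of Q^μ(s,a) = r(s,a) + γ E_{s'∼P(s,a)} E_{a'∼μ(s')}[Q^μ(s', a')]. -/
open Finset

theorem fixedPoint_budget_zero_eq_Qmu {S A : Type*} [Fintype S] [Nonempty S] [Fintype A] [Nonempty A] {B : ℕ}
    (γ : ℝ) (hγ0 : 0 ≤ γ) (hγ1 : γ < 1)
    (r : S → A → ℝ)
    (P : S → A → S → ℝ) (hP0 : ∀ s a s', 0 ≤ P s a s') (hP1 : ∀ s a, ∑ s', P s a s' = 1)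
    (μ : S → A → ℝ) (hμ0 : ∀ s a, 0 ≤ μ s a) (hμ1 : ∀ s, ∑ a, μ s a = 1)
    (Qst : S → Fin (B + 1) → A → ℝ) (hQst : TCB γ r P μ Qst = Qst)
    (Qmu : S → A → ℝ)
    (hQmu : ∀ s a, Qmu s a = r s a + γ * ∑ s', P s a s' * expct (μ s') (Qmu s')) :
    ∀ s a, Qst s (0 : Fin (B + 1)) a = Qmu s a := by
  set D : S → A → ℝ := fun s a => Qst s (0 : Fin (B + 1)) a - Qmu s a with hD
  set M := supNormSA D with hM
  have hle : ∀ s a, |D s a| ≤ M := by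
    intro s a
    exact Finset.le_sup' (fun x : S × A => |D x.1 x.2|) (Finset.mem_univ (s, a))
  have hM0 : 0 ≤ M := le_trans (abs_nonneg _) (hle (Classical.arbitrary S) (Classical.arbitrary A))
  have hexp : ∀ s', |expct (μ s') (D s')| ≤ M := by
    intro s'
    calc |expct (μ s') (D s')| ≤ ∑ a, |μ s' a * D s' a| := by
          exact Finset.abs_sum_le_sum_abs _ _
      _ ≤ ∑ a, μ s' a * M := by
          apply Finset.sum_le_sum
          intro a _
          rw [abs_mul, abs_of_nonneg (hμ0 s' a)]
          exact mul_le_mul_of_nonneg_left (hle s' a) (hμ0 s' a)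
      _ = M := by rw [← Finset.sum_mul, hμ1 s', one_mul]
  have hDrec : ∀ s a, D s a = γ * ∑ s', P s a s' * expct (μ s') (D s') := by
    intro s a
    have h1 : Qst s (0 : Fin (B + 1)) a =
        r s a + γ * ∑ s', P s a s' * expct (μ s') (Qst s' (0 : Fin (B + 1))) := by
      conv_lhs => rw [← hQst]
      simp only [TCB, VQ]
      congr 1
    have h2 := hQmu s a
    have hes : ∀ s', expct (μ s') (D s') =
        expct (μ s') (Qst s' (0 : Fin (B + 1))) - expct (μ s') (Qmu s') := by
      intro s'
      simp [expct, hD, mul_sub, Finset.sum_sub_distrib]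
    simp only [hD, h1, h2, hes, mul_sub, Finset.sum_sub_distrib]
    simp only [expct, mul_sub, Finset.sum_sub_distrib]
    ring
  have hkey : ∀ s a, |D s a| ≤ γ * M := by
    intro s a
    rw [hDrec s a, abs_mul, abs_of_nonneg hγ0]
    apply mul_le_mul_of_nonneg_left _ hγ0
    calc |∑ s', P s a s' * expct (μ s') (D s')| ≤ ∑ s', |P s a s' * expct (μ s') (D s')| :=
          Finset.abs_sum_le_sum_abs _ _
      _ ≤ ∑ s', P s a s' * M := by
          apply Finset.sum_le_sum
          intro s' _
          rw [abs_mul, abs_of_nonneg (hP0 s a s')]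
          exact mul_le_mul_of_nonneg_left (hexp s') (hP0 s a s')
      _ = M := by rw [← Finset.sum_mul, hP1 s a, one_mul]
  have hMle : M ≤ γ * M := by
    rw [hM, supNormSA]
    apply Finset.sup'_le
    intro x _
    exact hkey x.1 x.2
  have hMz : M ≤ 0 := by nlinarith
  intro s a
  have : |D s a| ≤ 0 := le_trans (hle s a) hMz
  have := abs_nonneg (D s a)
  have hDz : D s a = 0 := abs_eq_zero.mp (le_antisymm ‹|D s a| ≤ 0› this)
  simpa [hD, sub_eq_zero] using hDz
end

section
/- For the fixed point Q* of the counterfactual-budgeting Bellman operator with budget bound B, the value at maximal budget is at most the unconstrained optimal Q-value: Q*(s, B, a) ≤ Q^⋆(s, a) for all s, a, where Q^⋆ is the fixed point of the standard optimal Bellman operator T^⋆ Q(s,a) = r(s,a) + γ E_{s'}[max_{a'} Q(s', a')]. -/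
open Finset

theorem fixedPoint_le_optimal {S A : Type*} [Fintype S] [Nonempty S] [Fintype A] [Nonempty A] {B : ℕ}
    (γ : ℝ) (hγ0 : 0 ≤ γ) (hγ1 : γ < 1)
    (r : S → A → ℝ)
    (P : S → A → S → ℝ) (hP0 : ∀ s a s', 0 ≤ P s a s') (hP1 : ∀ s a, ∑ s', P s a s' = 1)
    (μ : S → A → ℝ) (hμ0 : ∀ s a, 0 ≤ μ s a) (hμ1 : ∀ s, ∑ a, μ s a = 1)
    (Qst : S → Fin (B + 1) → A → ℝ) (hQst : TCB γ r P μ Qst = Qst)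
    (Qopt : S → A → ℝ)
    (hQopt : ∀ s a, Qopt s a = r s a + γ * ∑ s', P s a s' * amax (Qopt s')) :
    ∀ s a, Qst s (Fin.last B) a ≤ Qopt s a := by
  -- Let D be the sup of the difference Qst - Qopt over all triples.
  set D : ℝ := Finset.univ.sup' Finset.univ_nonempty
    (fun x : S × Fin (B + 1) × A => Qst x.1 x.2.1 x.2.2 - Qopt x.1 x.2.2) with hD
  have hle : ∀ s (b : Fin (B + 1)) a, Qst s b a - Qopt s a ≤ D := by
    intro s b a
    exact Finset.le_sup' (f := fun x : S × Fin (B + 1) × A =>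
      Qst x.1 x.2.1 x.2.2 - Qopt x.1 x.2.2) (Finset.mem_univ (s, b, a))
  -- pointwise: amax (Qst s' b') ≤ amax (Qopt s') + D
  have hamax : ∀ (s' : S) (b' : Fin (B + 1)),
      amax (Qst s' b') ≤ amax (Qopt s') + D := by
    intro s' b'
    apply Finset.sup'_le
    intro a' _
    have h1 : Qst s' b' a' - Qopt s' a' ≤ D := hle s' b' a'
    have h2 : Qopt s' a' ≤ amax (Qopt s') :=
      Finset.le_sup' (f := Qopt s') (Finset.mem_univ a')
    linarith
  have hexpct : ∀ (s' : S) (b' : Fin (B + 1)),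
      expct (μ s') (Qst s' b') ≤ amax (Qopt s') + D := by
    intro s' b'
    have : expct (μ s') (Qst s' b') ≤ ∑ a', μ s' a' * (amax (Qopt s') + D) := by
      apply Finset.sum_le_sum
      intro a' _
      have h2 : Qopt s' a' ≤ amax (Qopt s') :=
        Finset.le_sup' (f := Qopt s') (Finset.mem_univ a')
      have h1 : Qst s' b' a' - Qopt s' a' ≤ D := hle s' b' a'
      have := hμ0 s' a'
      nlinarith
    calc expct (μ s') (Qst s' b') ≤ ∑ a', μ s' a' * (amax (Qopt s') + D) := this
      _ = (∑ a', μ s' a') * (amax (Qopt s') + D) := by rw [Finset.sum_mul]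
      _ = amax (Qopt s') + D := by rw [hμ1 s']; ring
  have hVQ : ∀ (s' : S) (b' : Fin (B + 1)),
      VQ μ Qst s' b' ≤ amax (Qopt s') + D := by
    intro s' b'
    unfold VQ
    split
    · exact hexpct s' b'
    · exact max_le (hamax s' _) (hexpct s' b')
  -- D ≤ γ * D
  have hDγ : D ≤ γ * D := by
    obtain ⟨x, -, hx⟩ := Finset.exists_mem_eq_sup' (Finset.univ_nonempty)
      (fun x : S × Fin (B + 1) × A => Qst x.1 x.2.1 x.2.2 - Qopt x.1 x.2.2)
    obtain ⟨s, b, a⟩ := x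
    have hst : Qst s b a = r s a + γ * ∑ s', P s a s' * VQ μ Qst s' b := by
      conv_lhs => rw [← hQst]
      rfl
    have hsum : ∑ s', P s a s' * VQ μ Qst s' b ≤
        (∑ s', P s a s' * amax (Qopt s')) + D := by
      have : ∑ s', P s a s' * VQ μ Qst s' b ≤
          ∑ s', P s a s' * (amax (Qopt s') + D) := by
        apply Finset.sum_le_sum
        intro s' _
        exact mul_le_mul_of_nonneg_left (hVQ s' b) (hP0 s a s')
      calc ∑ s', P s a s' * VQ μ Qst s' b
          ≤ ∑ s', P s a s' * (amax (Qopt s') + D) := this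
        _ = (∑ s', P s a s' * amax (Qopt s')) + (∑ s', P s a s') * D := by
            rw [Finset.sum_mul, ← Finset.sum_add_distrib]; exact Finset.sum_congr rfl fun _ _ => by ring
        _ = (∑ s', P s a s' * amax (Qopt s')) + D := by rw [hP1 s a]; ring
    have hopt := hQopt s a
    have : D = Qst s b a - Qopt s a := hx
    rw [this, hst, hopt]
    nlinarith [hsum]
  have hD0 : D ≤ 0 := by nlinarith
  intro s a
  have := hle s (Fin.last B) a
  linarith
end

section
/- For the fixed point Q* of the counterfactual-budgeting Bellman operator, and Q^μ the behavior policy evaluation fixed point, Q*(s, b, a) ≥ Q^μ(s, a) for all s, a and all budgets b ∈ {0, ..., B}. -/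
open Finset

theorem fixedPoint_ge_Qmu {S A : Type*} [Fintype S] [Nonempty S] [Fintype A] [Nonempty A] {B : ℕ}
    (γ : ℝ) (hγ0 : 0 ≤ γ) (hγ1 : γ < 1)
    (r : S → A → ℝ)
    (P : S → A → S → ℝ) (hP0 : ∀ s a s', 0 ≤ P s a s') (hP1 : ∀ s a, ∑ s', P s a s' = 1)
    (μ : S → A → ℝ) (hμ0 : ∀ s a, 0 ≤ μ s a) (hμ1 : ∀ s, ∑ a, μ s a = 1)
    (Qst : S → Fin (B + 1) → A → ℝ) (hQst : TCB γ r P μ Qst = Qst)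
    (Qmu : S → A → ℝ)
    (hQmu : ∀ s a, Qmu s a = r s a + γ * ∑ s', P s a s' * expct (μ s') (Qmu s')) :
    ∀ (s : S) (a : A) (b : Fin (B + 1)), Qmu s a ≤ Qst s b a := by

  have key : ∀ s b, expct (μ s) (Qst s b) ≤ VQ μ Qst s b := by
    intro s b
    unfold VQ
    split
    · exact le_refl _
    · exact le_max_right _ _
  set D : S × Fin (B + 1) × A → ℝ := fun x => Qmu x.1 x.2.2 - Qst x.1 x.2.1 x.2.2 with hD
  set M : ℝ := Finset.univ.sup' Finset.univ_nonempty D with hM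
  have hle : ∀ s b a, Qmu s a - Qst s b a ≤ M := fun s b a =>
    Finset.le_sup' D (Finset.mem_univ (s, b, a))
  obtain ⟨x, -, hx⟩ := Finset.exists_mem_eq_sup' (Finset.univ_nonempty) D
  obtain ⟨s, b, a⟩ := x
  have hQsteq : ∀ s b a, Qst s b a = r s a + γ * ∑ s', P s a s' * VQ μ Qst s' b := by
    intro s b a
    conv_lhs => rw [← hQst]
    rfl
  have hterm : ∀ s', expct (μ s') (Qmu s') - VQ μ Qst s' b ≤ M := by
    intro s'
    have h1 : expct (μ s') (Qmu s') - VQ μ Qst s' b ≤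
        expct (μ s') (Qmu s') - expct (μ s') (Qst s' b) := by
      linarith [key s' b]
    have h2 : expct (μ s') (Qmu s') - expct (μ s') (Qst s' b) ≤ M := by
      unfold expct
      rw [← Finset.sum_sub_distrib]
      calc ∑ a', (μ s' a' * Qmu s' a' - μ s' a' * Qst s' b a')
          = ∑ a', μ s' a' * (Qmu s' a' - Qst s' b a') := by
            apply Finset.sum_congr rfl; intros; ring
        _ ≤ ∑ a', μ s' a' * M := by
            apply Finset.sum_le_sum
            intro a' _
            exact mul_le_mul_of_nonneg_left (hle s' b a') (hμ0 s' a')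
        _ = M := by rw [← Finset.sum_mul, hμ1 s', one_mul]
    linarith
  have hMle : M ≤ γ * M := by
    have heq : M = γ * ∑ s', P s a s' * (expct (μ s') (Qmu s') - VQ μ Qst s' b) := by
      rw [hM, hx]
      simp only [hD]
      rw [hQmu s a, hQsteq s b a]
      simp only [mul_sub, Finset.sum_sub_distrib]
      ring
    have hsum : ∑ s', P s a s' * (expct (μ s') (Qmu s') - VQ μ Qst s' b) ≤ M :=
      calc ∑ s', P s a s' * (expct (μ s') (Qmu s') - VQ μ Qst s' b)
          ≤ ∑ s', P s a s' * M := by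
            apply Finset.sum_le_sum
            intro s' _
            exact mul_le_mul_of_nonneg_left (hterm s') (hP0 s a s')
        _ = M := by rw [← Finset.sum_mul, hP1 s a, one_mul]
    calc M = γ * ∑ s', P s a s' * (expct (μ s') (Qmu s') - VQ μ Qst s' b) := heq
      _ ≤ γ * M := mul_le_mul_of_nonneg_left hsum hγ0
  have hM0 : M ≤ 0 := by nlinarith
  intro s0 a0 b0
  linarith [hle s0 b0 a0]
end

section
/- Two-sided sandwich for the budgeted fixed point: for all s, a, and b ∈ {0,...,B}, Q^μ(s,a) ≤ Q*(s,b,a) ≤ Q^⋆(s,a), where Q^μ is the behavior-policy evaluation fixed point and Q^⋆ is the unconstrained optimal Q fixed point. -/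
open Finset

lemma wavg_le {A : Type*} [Fintype A] (p f : A → ℝ) (c : ℝ)
    (hp0 : ∀ a, 0 ≤ p a) (hp1 : ∑ a, p a = 1) (h : ∀ a, f a ≤ c) :
    ∑ a, p a * f a ≤ c := by
  calc ∑ a, p a * f a ≤ ∑ a, p a * c :=
        Finset.sum_le_sum (fun a _ => mul_le_mul_of_nonneg_left (h a) (hp0 a))
    _ = c := by rw [← Finset.sum_mul, hp1, one_mul]

theorem fixedPoint_sandwich {S A : Type*} [Fintype S] [Nonempty S] [Fintype A] [Nonempty A] {B : ℕ}
    (γ : ℝ) (hγ0 : 0 ≤ γ) (hγ1 : γ < 1)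
    (r : S → A → ℝ)
    (P : S → A → S → ℝ) (hP0 : ∀ s a s', 0 ≤ P s a s') (hP1 : ∀ s a, ∑ s', P s a s' = 1)
    (μ : S → A → ℝ) (hμ0 : ∀ s a, 0 ≤ μ s a) (hμ1 : ∀ s, ∑ a, μ s a = 1)
    (Qst : S → Fin (B + 1) → A → ℝ) (hQst : TCB γ r P μ Qst = Qst)
    (Qmu : S → A → ℝ)
    (hQmu : ∀ s a, Qmu s a = r s a + γ * ∑ s', P s a s' * expct (μ s') (Qmu s'))
    (Qopt : S → A → ℝ)
    (hQopt : ∀ s a, Qopt s a = r s a + γ * ∑ s', P s a s' * amax (Qopt s')) :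
    ∀ (s : S) (a : A) (b : Fin (B + 1)), Qmu s a ≤ Qst s b a ∧ Qst s b a ≤ Qopt s a := by

  have hQst' : ∀ s b a, Qst s b a = r s a + γ * ∑ s', P s a s' * VQ μ Qst s' b :=
    fun s b a => (congrFun (congrFun (congrFun hQst s) b) a).symm
  set D1 : ℝ := Finset.univ.sup' Finset.univ_nonempty
    (fun x : S × Fin (B + 1) × A => Qmu x.1 x.2.2 - Qst x.1 x.2.1 x.2.2) with hD1def
  set D2 : ℝ := Finset.univ.sup' Finset.univ_nonempty
    (fun x : S × Fin (B + 1) × A => Qst x.1 x.2.1 x.2.2 - Qopt x.1 x.2.2) with hD2def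
  have hD1le : ∀ s (b : Fin (B+1)) a, Qmu s a - Qst s b a ≤ D1 := fun s b a =>
    Finset.le_sup' (fun x : S × Fin (B + 1) × A => Qmu x.1 x.2.2 - Qst x.1 x.2.1 x.2.2)
      (Finset.mem_univ (s, b, a))
  have hD2le : ∀ s (b : Fin (B+1)) a, Qst s b a - Qopt s a ≤ D2 := fun s b a =>
    Finset.le_sup' (fun x : S × Fin (B + 1) × A => Qst x.1 x.2.1 x.2.2 - Qopt x.1 x.2.2)
      (Finset.mem_univ (s, b, a))
  have key1 : ∀ s (b : Fin (B+1)) a, Qmu s a - Qst s b a ≤ γ * D1 := by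
    intro s b a
    rw [hQmu s a, hQst' s b a]
    have hrw : (r s a + γ * ∑ s', P s a s' * expct (μ s') (Qmu s'))
        - (r s a + γ * ∑ s', P s a s' * VQ μ Qst s' b)
        = γ * ∑ s', P s a s' * (expct (μ s') (Qmu s') - VQ μ Qst s' b) := by
      simp only [mul_sub, Finset.sum_sub_distrib]
      ring
    rw [hrw]
    refine mul_le_mul_of_nonneg_left ?_ hγ0
    refine wavg_le _ _ _ (hP0 s a) (hP1 s a) (fun s' => ?_)
    have hV : expct (μ s') (Qst s' b) ≤ VQ μ Qst s' b := by
      unfold VQ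
      split
      · exact le_refl _
      · exact le_max_right _ _
    have hE : expct (μ s') (Qmu s') - expct (μ s') (Qst s' b) ≤ D1 := by
      have heq : expct (μ s') (Qmu s') - expct (μ s') (Qst s' b)
          = ∑ a', μ s' a' * (Qmu s' a' - Qst s' b a') := by
        unfold expct
        simp only [mul_sub, Finset.sum_sub_distrib]
      rw [heq]
      exact wavg_le _ _ _ (hμ0 s') (hμ1 s') (fun a' => hD1le s' b a')
    linarith
  have key2 : ∀ s (b : Fin (B+1)) a, Qst s b a - Qopt s a ≤ γ * D2 := by
    intro s b a
    rw [hQopt s a, hQst' s b a]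
    have hrw : (r s a + γ * ∑ s', P s a s' * VQ μ Qst s' b)
        - (r s a + γ * ∑ s', P s a s' * amax (Qopt s'))
        = γ * ∑ s', P s a s' * (VQ μ Qst s' b - amax (Qopt s')) := by
      simp only [mul_sub, Finset.sum_sub_distrib]
      ring
    rw [hrw]
    refine mul_le_mul_of_nonneg_left ?_ hγ0
    refine wavg_le _ _ _ (hP0 s a) (hP1 s a) (fun s' => ?_)
    have hAle : ∀ b' : Fin (B+1), amax (Qst s' b') ≤ amax (Qopt s') + D2 := by
      intro b'
      refine Finset.sup'_le _ _ (fun a' _ => ?_)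
      have h1 := hD2le s' b' a'
      have h2 : Qopt s' a' ≤ amax (Qopt s') :=
        Finset.le_sup' (Qopt s') (Finset.mem_univ a')
      linarith
    have hEle : ∀ b' : Fin (B+1), expct (μ s') (Qst s' b') ≤ amax (Qopt s') + D2 := by
      intro b'
      refine wavg_le _ _ _ (hμ0 s') (hμ1 s') (fun a' => ?_)
      have h1 := hD2le s' b' a'
      have h2 : Qopt s' a' ≤ amax (Qopt s') :=
        Finset.le_sup' (Qopt s') (Finset.mem_univ a')
      linarith
    have hVle : VQ μ Qst s' b ≤ amax (Qopt s') + D2 := by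
      unfold VQ
      split
      · exact hEle b
      · exact max_le (hAle _) (hEle b)
    linarith
  have hD1 : D1 ≤ γ * D1 :=
    Finset.sup'_le _ _ (fun x _ => key1 x.1 x.2.1 x.2.2)
  have hD2 : D2 ≤ γ * D2 :=
    Finset.sup'_le _ _ (fun x _ => key2 x.1 x.2.1 x.2.2)
  have hD1neg : D1 ≤ 0 := by nlinarith
  have hD2neg : D2 ≤ 0 := by nlinarith
  intro s a b
  exact ⟨by linarith [hD1le s b a], by linarith [hD2le s b a]⟩
end
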